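/- Let D > 0, α ∈ ℝ, l₁ > 0 and λ₁, λ₂ ∈ ℝ. Let φ₁, φ₂ : [0, l₁] → ℝ be twice continuously differentiable and satisfy −D φ₁''(x) + α φ₁'(x) = λ₁ φ₁(x) and −D φ₂''(x) + α φ₂'(x) = λ₂ φ₂(x) for all x ∈ [0, l₁], with φ₁'(0) = 0, φ₂'(0) = 0 and φ₁(l₁) = 0. Then (λ₁ − λ₂) ∫₀^{l₁} e^{−(α/D)x} φ₁(x) φ₂(x) dx = −D e^{−(α/D) l₁} φ₁'(l₁) φ₂(l₁). -/

import Mathlib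

theorem stmt_2 (D α l₁ lam₁ lam₂ : ℝ) (φ₁ φ₂ φ₁' φ₂' φ₁'' φ₂'' : ℝ → ℝ)
    (hD : 0 < D) (hl₁ : 0 < l₁)
    (hd₁ : ∀ x ∈ Set.Icc (0:ℝ) l₁, HasDerivAt φ₁ (φ₁' x) x)
    (hd₁' : ∀ x ∈ Set.Icc (0:ℝ) l₁, HasDerivAt φ₁' (φ₁'' x) x)
    (hd₂ : ∀ x ∈ Set.Icc (0:ℝ) l₁, HasDerivAt φ₂ (φ₂' x) x)
    (hd₂' : ∀ x ∈ Set.Icc (0:ℝ) l₁, HasDerivAt φ₂' (φ₂'' x) x)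
    (hc₁ : ContinuousOn φ₁'' (Set.Icc (0:ℝ) l₁))
    (hc₂ : ContinuousOn φ₂'' (Set.Icc (0:ℝ) l₁))
    (hode₁ : ∀ x ∈ Set.Icc (0:ℝ) l₁, -D * φ₁'' x + α * φ₁' x = lam₁ * φ₁ x)
    (hode₂ : ∀ x ∈ Set.Icc (0:ℝ) l₁, -D * φ₂'' x + α * φ₂' x = lam₂ * φ₂ x)
    (hb₁ : φ₁' 0 = 0) (hb₂ : φ₂' 0 = 0) (hb₃ : φ₁ l₁ = 0) :
    (lam₁ - lam₂) * ∫ x in (0:ℝ)..l₁, Real.exp (-(α / D) * x) * φ₁ x * φ₂ x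
      = -D * Real.exp (-(α / D) * l₁) * φ₁' l₁ * φ₂ l₁ := by
  have hD' : D ≠ 0 := ne_of_gt hD
  set β : ℝ := α / D with hβ
  set F : ℝ → ℝ := fun x =>
    -D * (Real.exp (-β * x) * (φ₁' x * φ₂ x - φ₂' x * φ₁ x)) with hF
  have hIcc : Set.uIcc (0:ℝ) l₁ = Set.Icc 0 l₁ := Set.uIcc_of_le hl₁.le
  have key : ∀ x ∈ Set.uIcc (0:ℝ) l₁,
      HasDerivAt F ((lam₁ - lam₂) * (Real.exp (-β * x) * φ₁ x * φ₂ x)) x := by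
    intro x hx
    rw [hIcc] at hx
    have he : HasDerivAt (fun x => Real.exp (-β * x)) (-β * Real.exp (-β * x)) x := by
      have := ((hasDerivAt_id x).const_mul (-β)).exp
      simpa [mul_comm] using this
    have hprod : HasDerivAt (fun x => φ₁' x * φ₂ x - φ₂' x * φ₁ x)
        (φ₁'' x * φ₂ x + φ₁' x * φ₂' x - (φ₂'' x * φ₁ x + φ₂' x * φ₁' x)) x :=
      ((hd₁' x hx).mul (hd₂ x hx)).sub ((hd₂' x hx).mul (hd₁ x hx))
    have h := (he.mul hprod).const_mul (-D)
    refine (h.congr_deriv ?_).congr_deriv rfl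
    symm
    have h1 := hode₁ x hx
    have h2 := hode₂ x hx
    have hDβ : D * β = α := by rw [hβ, mul_div_assoc', mul_div_cancel_left₀ α hD']
    linear_combination -(Real.exp (-β*x) * φ₂ x) * h1 + (Real.exp (-β*x) * φ₁ x) * h2
      - (Real.exp (-β*x) * (φ₁' x * φ₂ x - φ₂' x * φ₁ x)) * hDβ
  have hcont : ContinuousOn (fun x => (lam₁ - lam₂) * (Real.exp (-β * x) * φ₁ x * φ₂ x))
      (Set.uIcc (0:ℝ) l₁) := by
    rw [hIcc]
    have c1 : ContinuousOn φ₁ (Set.Icc (0:ℝ) l₁) := fun x hx =>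
      ((hd₁ x hx).continuousAt).continuousWithinAt
    have c2 : ContinuousOn φ₂ (Set.Icc (0:ℝ) l₁) := fun x hx =>
      ((hd₂ x hx).continuousAt).continuousWithinAt
    exact (continuousOn_const.mul (((Real.continuous_exp.comp
      (continuous_const.mul continuous_id)).continuousOn.mul c1).mul c2))
  have hint : IntervalIntegrable
      (fun x => (lam₁ - lam₂) * (Real.exp (-β * x) * φ₁ x * φ₂ x))
      MeasureTheory.volume 0 l₁ := hcont.intervalIntegrable
  have hFTC := intervalIntegral.integral_eq_sub_of_hasDerivAt key hint
  have : ∫ x in (0:ℝ)..l₁, (lam₁ - lam₂) * (Real.exp (-β * x) * φ₁ x * φ₂ x)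
      = F l₁ - F 0 := hFTC
  rw [intervalIntegral.integral_const_mul] at this
  calc (lam₁ - lam₂) * ∫ x in (0:ℝ)..l₁, Real.exp (-β * x) * φ₁ x * φ₂ x
      = F l₁ - F 0 := by
        rw [← this]
    _ = -D * Real.exp (-β * l₁) * φ₁' l₁ * φ₂ l₁ := by
        simp only [hF]
        rw [hb₁, hb₂, hb₃]
        ring
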